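/- arXiv:0812.0305 — 3 statements merged into one kernel-verified Lean document; each statement's English description precedes it below -/
import Mathlib

section
/- Let c > 0 and χ > 0, and let 𝐁, 𝐄 : ℝ × ℝ³ → ℝ³ and ψ : ℝ × ℝ³ → ℝ be functions of time t and space x that are sufficiently smooth (four times continuously differentiable). Suppose the corrected Faraday equation ∂ₜ𝐁 + ∇×𝐄 + χ∇ψ = 0 and the correction-potential equation ∂ₜψ + χc²(∇·𝐁) = 0 hold everywhere. Then the divergence constraint error d := ∇·𝐁 satisfies the wave equation ∂ₜ²d = χ²c² Δd, i.e., the error in the constraint ∇·𝐁 = 0 propagates with speed cχ. -/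
noncomputable section

/-- The `i`-th standard basis vector of `ℝ³ = Fin 3 → ℝ`. -/
def sb (i : Fin 3) : Fin 3 → ℝ := Pi.single i 1

/-- Partial derivative in time (the first, `ℝ`, argument). -/
def pt3 {E : Type*} [NormedAddCommGroup E] [NormedSpace ℝ E]
    (f : ℝ × (Fin 3 → ℝ) → E) (p : ℝ × (Fin 3 → ℝ)) : E :=
  fderiv ℝ f p (1, 0)

/-- Spatial partial derivative in the `i`-th coordinate direction. -/
def pd3 {E : Type*} [NormedAddCommGroup E] [NormedSpace ℝ E]
    (i : Fin 3) (f : ℝ × (Fin 3 → ℝ) → E) (p : ℝ × (Fin 3 → ℝ)) : E :=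
  fderiv ℝ f p (0, sb i)

/-- Spatial divergence of a vector field. -/
def div3 (F : ℝ × (Fin 3 → ℝ) → (Fin 3 → ℝ)) (p : ℝ × (Fin 3 → ℝ)) : ℝ :=
  ∑ i, pd3 i (fun q => F q i) p

/-- Spatial curl of a vector field. -/
def curl3 (F : ℝ × (Fin 3 → ℝ) → (Fin 3 → ℝ)) (p : ℝ × (Fin 3 → ℝ)) : Fin 3 → ℝ :=
  ![pd3 1 (fun q => F q 2) p - pd3 2 (fun q => F q 1) p,
    pd3 2 (fun q => F q 0) p - pd3 0 (fun q => F q 2) p,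
    pd3 0 (fun q => F q 1) p - pd3 1 (fun q => F q 0) p]

/-- Spatial gradient of a scalar field. -/
def grad3 (f : ℝ × (Fin 3 → ℝ) → ℝ) (p : ℝ × (Fin 3 → ℝ)) : Fin 3 → ℝ :=
  fun i => pd3 i f p

/-- Spatial Laplacian of a scalar field. -/
def lap3 (f : ℝ × (Fin 3 → ℝ) → ℝ) (p : ℝ × (Fin 3 → ℝ)) : ℝ :=
  ∑ i, pd3 i (fun q => pd3 i f q) p

/- ### Auxiliary lemmas -/

lemma dd_cd {m n : ℕ} {f : (ℝ × (Fin 3 → ℝ)) → ℝ} (h : (m : WithTop ℕ∞) + 1 ≤ n)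
    (hf : ContDiff ℝ n f) (v : ℝ × (Fin 3 → ℝ)) :
    ContDiff ℝ m fun q => fderiv ℝ f q v :=
  (ContinuousLinearMap.apply ℝ ℝ v).contDiff.comp (hf.fderiv_right h)

lemma pd3_cd {m n : ℕ} {f : (ℝ × (Fin 3 → ℝ)) → ℝ} (h : (m : WithTop ℕ∞) + 1 ≤ n)
    (hf : ContDiff ℝ n f) (i : Fin 3) :
    ContDiff ℝ m fun q => pd3 i f q :=
  dd_cd h hf _

lemma swapD {f : (ℝ × (Fin 3 → ℝ)) → ℝ} (hf : ContDiff ℝ 2 f)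
    (v w p : ℝ × (Fin 3 → ℝ)) :
    fderiv ℝ (fun q => fderiv ℝ f q v) p w = fderiv ℝ (fun q => fderiv ℝ f q w) p v := by
  have hd : DifferentiableAt ℝ (fderiv ℝ f) p :=
    ((hf.fderiv_right (m := 1) (by norm_num)).differentiable one_ne_zero) p
  have key : ∀ u z : ℝ × (Fin 3 → ℝ),
      fderiv ℝ (fun q => fderiv ℝ f q u) p z = fderiv ℝ (fderiv ℝ f) p z u := by
    intro u z
    have h1 : (fun q => fderiv ℝ f q u)
        = (ContinuousLinearMap.apply ℝ ℝ u) ∘ (fderiv ℝ f) := rfl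
    rw [h1, fderiv_comp p (ContinuousLinearMap.differentiableAt _) hd,
      ContinuousLinearMap.fderiv]
    rfl
  rw [key v w, key w v]
  exact hf.contDiffAt.isSymmSndFDerivAt (by simp [minSmoothness_of_isRCLikeNormedField]) w v

lemma swap_pt_pd {f : (ℝ × (Fin 3 → ℝ)) → ℝ} (hf : ContDiff ℝ 2 f) (i : Fin 3)
    (p : ℝ × (Fin 3 → ℝ)) :
    pt3 (fun q => pd3 i f q) p = pd3 i (fun q => pt3 f q) p :=
  swapD hf (0, sb i) (1, 0) p

lemma swap_pd_pd {f : (ℝ × (Fin 3 → ℝ)) → ℝ} (hf : ContDiff ℝ 2 f) (i j : Fin 3)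
    (p : ℝ × (Fin 3 → ℝ)) :
    pd3 i (fun q => pd3 j f q) p = pd3 j (fun q => pd3 i f q) p :=
  swapD hf (0, sb j) (0, sb i) p

lemma proj_fderiv (F : ℝ × (Fin 3 → ℝ) → (Fin 3 → ℝ)) (hF : Differentiable ℝ F)
    (k : Fin 3) (v p : ℝ × (Fin 3 → ℝ)) :
    fderiv ℝ (fun q => F q k) p v = fderiv ℝ F p v k := by
  have h1 : (fun q => F q k)
      = (ContinuousLinearMap.proj (R := ℝ) (φ := fun _ : Fin 3 => ℝ) k) ∘ F := rfl
  rw [h1, fderiv_comp p (ContinuousLinearMap.differentiableAt _) (hF p),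
    ContinuousLinearMap.fderiv]
  rfl

lemma dir_sum (g : Fin 3 → (ℝ × (Fin 3 → ℝ)) → ℝ) (hg : ∀ k, Differentiable ℝ (g k))
    (v p : ℝ × (Fin 3 → ℝ)) :
    fderiv ℝ (fun q => ∑ k, g k q) p v = ∑ k, fderiv ℝ (g k) p v := by
  rw [fderiv_fun_sum (fun k _ => (hg k) p)]
  simp

lemma dir_sub (a b : (ℝ × (Fin 3 → ℝ)) → ℝ) (ha : Differentiable ℝ a)
    (hb : Differentiable ℝ b) (v p : ℝ × (Fin 3 → ℝ)) :
    fderiv ℝ (fun q => a q - b q) p v = fderiv ℝ a p v - fderiv ℝ b p v := by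
  rw [fderiv_fun_sub (ha p) (hb p)]; simp

lemma dir_neg_const_mul (a : (ℝ × (Fin 3 → ℝ)) → ℝ) (ha : Differentiable ℝ a)
    (b : ℝ) (v p : ℝ × (Fin 3 → ℝ)) :
    fderiv ℝ (fun q => -(b * a q)) p v = -(b * fderiv ℝ a p v) := by
  rw [fderiv_fun_neg, fderiv_const_mul (ha p)]; simp

lemma dir_neg_sub_mul (a b : (ℝ × (Fin 3 → ℝ)) → ℝ) (ha : Differentiable ℝ a)
    (hb : Differentiable ℝ b) (χ : ℝ) (v p : ℝ × (Fin 3 → ℝ)) :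
    fderiv ℝ (fun q => -(a q) - χ * b q) p v
      = -(fderiv ℝ a p v) - χ * fderiv ℝ b p v := by
  rw [fderiv_fun_sub (f := fun q => -a q) (ha p).neg ((hb p).const_mul χ), fderiv_fun_neg, fderiv_const_mul (hb p)]
  simp

lemma pd3_sub (i : Fin 3) (a b : (ℝ × (Fin 3 → ℝ)) → ℝ) (ha : Differentiable ℝ a)
    (hb : Differentiable ℝ b) (p : ℝ × (Fin 3 → ℝ)) :
    pd3 i (fun q => a q - b q) p = pd3 i a p - pd3 i b p :=
  dir_sub a b ha hb _ p

/-- **Wave equation for the divergence-constraint error.**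
If the corrected Faraday equation `∂ₜ𝐁 + ∇×𝐄 + χ∇ψ = 0` and the
correction-potential equation `∂ₜψ + χc²(∇·𝐁) = 0` hold everywhere, then the
divergence constraint error `d := ∇·𝐁` satisfies `∂ₜ²d = χ²c² Δd`, i.e. the
error in the constraint `∇·𝐁 = 0` propagates with speed `cχ`. -/
theorem divergence_constraint_error_wave_equation
    (c χ : ℝ) (hc : 0 < c) (hχ : 0 < χ)
    (B E : ℝ × (Fin 3 → ℝ) → (Fin 3 → ℝ)) (ψ : ℝ × (Fin 3 → ℝ) → ℝ)
    (hB : ContDiff ℝ 4 B) (hE : ContDiff ℝ 4 E) (hψ : ContDiff ℝ 4 ψ)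
    (faraday : ∀ p, pt3 B p + curl3 E p + χ • grad3 ψ p = 0)
    (cleaning : ∀ p, pt3 ψ p + χ * c ^ 2 * div3 B p = 0) :
    ∀ p, pt3 (fun q => pt3 (fun r => div3 B r) q) p
      = χ ^ 2 * c ^ 2 * lap3 (fun q => div3 B q) p := by
  -- component smoothness
  have hBc : ∀ k : Fin 3, ContDiff ℝ 4 fun q => B q k := fun k =>
    (ContinuousLinearMap.proj (R := ℝ) (φ := fun _ : Fin 3 => ℝ) k).contDiff.comp hB
  have hEc : ∀ k : Fin 3, ContDiff ℝ 4 fun q => E q k := fun k =>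
    (ContinuousLinearMap.proj (R := ℝ) (φ := fun _ : Fin 3 => ℝ) k).contDiff.comp hE
  have hpdB : ∀ i k : Fin 3, ContDiff ℝ 3 fun q => pd3 i (fun r => B r k) q :=
    fun i k => pd3_cd (by norm_num) (hBc k) i
  have hpdE : ∀ i k : Fin 3, ContDiff ℝ 3 fun q => pd3 i (fun r => E r k) q :=
    fun i k => pd3_cd (by norm_num) (hEc k) i
  have hpdψ : ∀ i : Fin 3, ContDiff ℝ 3 fun q => pd3 i ψ q :=
    fun i => pd3_cd (by norm_num) hψ i
  have hpdpdψ : ∀ i : Fin 3, ContDiff ℝ 2 fun q => pd3 i (fun r => pd3 i ψ r) q :=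
    fun i => pd3_cd (by norm_num) (hpdψ i) i
  have hd3 : ContDiff ℝ 3 fun r => div3 B r :=
    ContDiff.sum fun i _ => hpdB i i
  have hpd_d : ∀ i : Fin 3, ContDiff ℝ 2 fun q => pd3 i (fun r => div3 B r) q :=
    fun i => pd3_cd (by norm_num) hd3 i
  -- curl components
  have hcurl : ∀ k : Fin 3, Differentiable ℝ fun r => curl3 E r k := by
    intro k
    fin_cases k <;>
      simp only [curl3, Fin.isValue, Matrix.cons_val_zero, Matrix.cons_val_one,
        Matrix.head_cons, Matrix.cons_val_two, Matrix.tail_cons] <;>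
      exact ((hpdE _ _).sub (hpdE _ _)).differentiable (by norm_num)
  -- Faraday equation componentwise
  have hface : ∀ (k : Fin 3) r, pt3 (fun s => B s k) r
      = -(curl3 E r k) - χ * pd3 k ψ r := by
    intro k r
    have h := congrFun (faraday r) k
    simp only [Pi.add_apply, Pi.smul_apply, Pi.zero_apply, smul_eq_mul] at h
    have hproj : pt3 (fun s => B s k) r = pt3 B r k :=
      proj_fderiv B (hB.differentiable (by norm_num)) k _ r
    simp only [grad3] at h
    rw [hproj]
    linarith [h]
  -- Step 1: ∂ₜ (div B) = -χ Δψ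
  have F1 : ∀ q, pt3 (fun r => div3 B r) q = -(χ * lap3 ψ q) := by
    intro q
    have hsum : pt3 (fun r => div3 B r) q
        = ∑ k, pt3 (fun r => pd3 k (fun s => B s k) r) q :=
      dir_sum _ (fun k => (hpdB k k).differentiable (by norm_num)) (1, 0) q
    rw [hsum]
    have hswap : ∀ k : Fin 3, pt3 (fun r => pd3 k (fun s => B s k) r) q
        = pd3 k (fun r => pt3 (fun s => B s k) r) q :=
      fun k => swap_pt_pd ((hBc k).of_le (by norm_num)) k q
    have hrw : ∀ k : Fin 3, pd3 k (fun r => pt3 (fun s => B s k) r) q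
        = -(pd3 k (fun r => curl3 E r k) q) - χ * pd3 k (fun r => pd3 k ψ r) q := by
      intro k
      have he : (fun r => pt3 (fun s => B s k) r)
          = fun r => -(curl3 E r k) - χ * pd3 k ψ r := funext (hface k)
      rw [he]
      exact dir_neg_sub_mul _ _ (hcurl k)
        ((hpdψ k).differentiable (by norm_num)) χ (0, sb k) q
    have divcurl : ∑ k, pd3 k (fun r => curl3 E r k) q = 0 := by
      have e0 : (fun r => curl3 E r 0)
          = fun r => pd3 1 (fun s => E s 2) r - pd3 2 (fun s => E s 1) r := by
        funext r; simp [curl3]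
      have e1 : (fun r => curl3 E r 1)
          = fun r => pd3 2 (fun s => E s 0) r - pd3 0 (fun s => E s 2) r := by
        funext r; simp [curl3]
      have e2 : (fun r => curl3 E r 2)
          = fun r => pd3 0 (fun s => E s 1) r - pd3 1 (fun s => E s 0) r := by
        funext r; simp [curl3]
      rw [Fin.sum_univ_three, e0, e1, e2]
      have hdiff : ∀ i k : Fin 3, Differentiable ℝ fun r => pd3 i (fun s => E s k) r :=
        fun i k => (hpdE i k).differentiable (by norm_num)
      rw [pd3_sub 0 _ _ (hdiff 1 2) (hdiff 2 1) q,
        pd3_sub 1 _ _ (hdiff 2 0) (hdiff 0 2) q,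
        pd3_sub 2 _ _ (hdiff 0 1) (hdiff 1 0) q,
        swap_pd_pd ((hEc 2).of_le (by norm_num)) 0 1 q,
        swap_pd_pd ((hEc 1).of_le (by norm_num)) 0 2 q,
        swap_pd_pd ((hEc 0).of_le (by norm_num)) 1 2 q]
      ring
    calc ∑ k, pt3 (fun r => pd3 k (fun s => B s k) r) q
        = ∑ k, (-(pd3 k (fun r => curl3 E r k) q)
            - χ * pd3 k (fun r => pd3 k ψ r) q) := by
          refine Finset.sum_congr rfl fun k _ => ?_
          rw [hswap k, hrw k]
      _ = -(∑ k, pd3 k (fun r => curl3 E r k) q)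
            - χ * ∑ k, pd3 k (fun r => pd3 k ψ r) q := by
          rw [Finset.sum_sub_distrib, Finset.mul_sum, ← Finset.sum_neg_distrib]
      _ = -(χ * lap3 ψ q) := by rw [divcurl, lap3]; ring
  -- Step 2: conclude
  intro p
  have hfun : (fun q => pt3 (fun r => div3 B r) q) = fun q => -(χ * lap3 ψ q) :=
    funext F1
  rw [hfun]
  have hlapd : Differentiable ℝ fun q => lap3 ψ q :=
    (ContDiff.sum fun i (_ : i ∈ Finset.univ) => hpdpdψ i).differentiable (by norm_num)
  have step1 : pt3 (fun q => -(χ * lap3 ψ q)) p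
      = -(χ * pt3 (fun q => lap3 ψ q) p) :=
    dir_neg_const_mul _ hlapd χ (1, 0) p
  have step2 : pt3 (fun q => lap3 ψ q) p
      = ∑ i, pt3 (fun q => pd3 i (fun r => pd3 i ψ r) q) p :=
    dir_sum _ (fun i => (hpdpdψ i).differentiable (by norm_num)) (1, 0) p
  have step3 : ∀ i : Fin 3, pt3 (fun q => pd3 i (fun r => pd3 i ψ r) q) p
      = -(χ * c ^ 2 * pd3 i (fun q => pd3 i (fun r => div3 B r) q) p) := by
    intro i
    rw [swap_pt_pd ((hpdψ i).of_le (by norm_num)) i p]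
    have hin : (fun q => pt3 (fun r => pd3 i ψ r) q)
        = fun q => -(χ * c ^ 2 * pd3 i (fun r => div3 B r) q) := by
      funext q
      rw [swap_pt_pd (hψ.of_le (by norm_num)) i q]
      have hcl : (fun r => pt3 ψ r) = fun r => -(χ * c ^ 2 * div3 B r) :=
        funext fun r => by linarith [cleaning r]
      rw [hcl]
      exact dir_neg_const_mul _ (hd3.differentiable (by norm_num)) _ (0, sb i) q
    rw [hin]
    exact dir_neg_const_mul _ ((hpd_d i).differentiable (by norm_num)) _ (0, sb i) p
  rw [step1, step2, Finset.sum_congr rfl fun i _ => step3 i]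
  simp only [lap3]
  rw [Fin.sum_univ_three, Fin.sum_univ_three]
  ring
end
end

section
/- Let c > 0, χ > 0, ε₀ > 0, and let 𝐄, 𝐁, 𝐉 : ℝ × ℝ³ → ℝ³, φ : ℝ × ℝ³ → ℝ, σ : ℝ × ℝ³ → ℝ be four times continuously differentiable. Suppose the corrected Ampère equation ∂ₜ𝐄 − c²∇×𝐁 + χc²∇φ = −𝐉/ε₀, the correction-potential equation ∂ₜφ + χ(∇·𝐄 − σ/ε₀) = 0, and charge conservation ∂ₜσ + ∇·𝐉 = 0 hold everywhere. Then the Gauss-law constraint error g := ∇·𝐄 − σ/ε₀ satisfies the wave equation ∂ₜ²g = χ²c² Δg, i.e., the error in the constraint ∇·𝐄 = σ/ε₀ propagates with speed cχ. -/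
noncomputable section

/-! ### Auxiliary lemmas -/

abbrev P3 := ℝ × (Fin 3 → ℝ)

lemma contDiff_dirderiv {m n : WithTop ℕ∞} (f : P3 → ℝ) (hf : ContDiff ℝ n f)
    (hmn : m + 1 ≤ n) (v : P3) :
    ContDiff ℝ m (fun q => fderiv ℝ f q v) := by
  have h1 : ContDiff ℝ m (fderiv ℝ f) := hf.fderiv_right hmn
  exact (ContinuousLinearMap.apply ℝ ℝ v).contDiff.comp h1

lemma dirderiv_comm (f : P3 → ℝ) (hf : ContDiff ℝ 2 f) (u v p : P3) :
    fderiv ℝ (fun q => fderiv ℝ f q v) p u = fderiv ℝ (fun q => fderiv ℝ f q u) p v := by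
  have hdf : DifferentiableAt ℝ (fderiv ℝ f) p :=
    (hf.fderiv_right (m := 1) (by norm_num)).differentiable (by norm_num) p
  have key : ∀ w : P3, fderiv ℝ (fun q => fderiv ℝ f q w) p
      = (ContinuousLinearMap.apply ℝ ℝ w).comp (fderiv ℝ (fderiv ℝ f) p) := by
    intro w
    exact ((ContinuousLinearMap.apply ℝ ℝ w).hasFDerivAt.comp p hdf.hasFDerivAt).fderiv
  have hs : IsSymmSndFDerivAt ℝ f p := hf.contDiffAt.isSymmSndFDerivAt (by norm_num)
  simp only [key, ContinuousLinearMap.coe_comp', Function.comp_apply]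
  exact hs.eq u v

lemma dv_sub {f g : P3 → ℝ} {p : P3} (hf : DifferentiableAt ℝ f p)
    (hg : DifferentiableAt ℝ g p) (v : P3) :
    fderiv ℝ (fun q => f q - g q) p v = fderiv ℝ f p v - fderiv ℝ g p v := by
  rw [fderiv_fun_sub hf hg]; rfl

lemma dv_add {f g : P3 → ℝ} {p : P3} (hf : DifferentiableAt ℝ f p)
    (hg : DifferentiableAt ℝ g p) (v : P3) :
    fderiv ℝ (fun q => f q + g q) p v = fderiv ℝ f p v + fderiv ℝ g p v := by
  rw [fderiv_fun_add hf hg]; rfl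

lemma dv_const_mul {f : P3 → ℝ} {p : P3} (hf : DifferentiableAt ℝ f p) (a : ℝ) (v : P3) :
    fderiv ℝ (fun q => a * f q) p v = a * fderiv ℝ f p v := by
  rw [fderiv_const_mul hf a]; rfl

lemma dv_div_const {f : P3 → ℝ} {p : P3} (hf : DifferentiableAt ℝ f p) (a : ℝ) (v : P3) :
    fderiv ℝ (fun q => f q / a) p v = fderiv ℝ f p v / a := by
  simp only [div_eq_mul_inv]
  rw [show (fun q => f q * a⁻¹) = fun q => a⁻¹ * f q from funext fun q => mul_comm _ _]
  rw [dv_const_mul hf a⁻¹ v, mul_comm]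

lemma dv_pi {F : P3 → Fin 3 → ℝ} {p : P3} (hF : DifferentiableAt ℝ F p) (i : Fin 3) (v : P3) :
    fderiv ℝ (fun q => F q i) p v = fderiv ℝ F p v i := by
  have h := ((ContinuousLinearMap.proj (R := ℝ) (φ := fun _ : Fin 3 => ℝ) i).hasFDerivAt
      (x := F p)).comp p hF.hasFDerivAt
  have : fderiv ℝ (fun q => F q i) p
      = (ContinuousLinearMap.proj (R := ℝ) (φ := fun _ : Fin 3 => ℝ) i).comp (fderiv ℝ F p) :=
    h.fderiv
  rw [this]; rfl

/-! wrappers in terms of `pt3`/`pd3` -/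

lemma pt3_sub {f g : P3 → ℝ} {p : P3} (hf : DifferentiableAt ℝ f p)
    (hg : DifferentiableAt ℝ g p) :
    pt3 (fun q => f q - g q) p = pt3 f p - pt3 g p := dv_sub hf hg _

lemma pt3_add {f g : P3 → ℝ} {p : P3} (hf : DifferentiableAt ℝ f p)
    (hg : DifferentiableAt ℝ g p) :
    pt3 (fun q => f q + g q) p = pt3 f p + pt3 g p := dv_add hf hg _

lemma pt3_const_mul {f : P3 → ℝ} {p : P3} (hf : DifferentiableAt ℝ f p) (a : ℝ) :
    pt3 (fun q => a * f q) p = a * pt3 f p := dv_const_mul hf a _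

lemma pt3_div_const {f : P3 → ℝ} {p : P3} (hf : DifferentiableAt ℝ f p) (a : ℝ) :
    pt3 (fun q => f q / a) p = pt3 f p / a := dv_div_const hf a _

lemma pd3_sub_s4 {f g : P3 → ℝ} {p : P3} (hf : DifferentiableAt ℝ f p)
    (hg : DifferentiableAt ℝ g p) (i : Fin 3) :
    pd3 i (fun q => f q - g q) p = pd3 i f p - pd3 i g p := dv_sub hf hg _

lemma pd3_add {f g : P3 → ℝ} {p : P3} (hf : DifferentiableAt ℝ f p)
    (hg : DifferentiableAt ℝ g p) (i : Fin 3) :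
    pd3 i (fun q => f q + g q) p = pd3 i f p + pd3 i g p := dv_add hf hg _

lemma pd3_const_mul {f : P3 → ℝ} {p : P3} (hf : DifferentiableAt ℝ f p) (a : ℝ) (i : Fin 3) :
    pd3 i (fun q => a * f q) p = a * pd3 i f p := dv_const_mul hf a _

lemma pd3_comm (f : P3 → ℝ) (hf : ContDiff ℝ 2 f) (i j : Fin 3) (p : P3) :
    pd3 i (fun q => pd3 j f q) p = pd3 j (fun q => pd3 i f q) p :=
  dirderiv_comm f hf _ _ p

lemma pt3_pd3_comm (f : P3 → ℝ) (hf : ContDiff ℝ 2 f) (i : Fin 3) (p : P3) :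
    pt3 (fun q => pd3 i f q) p = pd3 i (fun q => pt3 f q) p :=
  dirderiv_comm f hf _ _ p

lemma contDiff_pd3 {m n : WithTop ℕ∞} {f : P3 → ℝ} (hf : ContDiff ℝ n f)
    (h : m + 1 ≤ n) (i : Fin 3) : ContDiff ℝ m (fun q => pd3 i f q) :=
  contDiff_dirderiv f hf h _

lemma contDiff_pt3 {m n : WithTop ℕ∞} {f : P3 → ℝ} (hf : ContDiff ℝ n f)
    (h : m + 1 ≤ n) : ContDiff ℝ m (fun q => pt3 f q) :=
  contDiff_dirderiv f hf h _

/-- **Wave equation for the Gauss-law constraint error.**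
If the corrected Ampère equation `∂ₜ𝐄 − c²∇×𝐁 + χc²∇φ = −𝐉/ε₀`, the
correction-potential equation `∂ₜφ + χ(∇·𝐄 − σ/ε₀) = 0`, and charge
conservation `∂ₜσ + ∇·𝐉 = 0` hold everywhere, then the Gauss-law constraint
error `g := ∇·𝐄 − σ/ε₀` satisfies `∂ₜ²g = χ²c² Δg`, i.e. the error in the
constraint `∇·𝐄 = σ/ε₀` propagates with speed `cχ`. -/
theorem gauss_law_constraint_error_wave_equation
    (c χ ε₀ : ℝ) (hc : 0 < c) (hχ : 0 < χ) (hε₀ : 0 < ε₀)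
    (E B J : ℝ × (Fin 3 → ℝ) → (Fin 3 → ℝ)) (φ σ : ℝ × (Fin 3 → ℝ) → ℝ)
    (hE : ContDiff ℝ 4 E) (hB : ContDiff ℝ 4 B) (hJ : ContDiff ℝ 4 J)
    (hφ : ContDiff ℝ 4 φ) (hσ : ContDiff ℝ 4 σ)
    (ampere : ∀ p, pt3 E p - c ^ 2 • curl3 B p + (χ * c ^ 2) • grad3 φ p
      = -(ε₀⁻¹ • J p))
    (cleaning : ∀ p, pt3 φ p + χ * (div3 E p - σ p / ε₀) = 0)
    (charge : ∀ p, pt3 σ p + div3 J p = 0) :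
    ∀ p, pt3 (fun q => pt3 (fun r => div3 E r - σ r / ε₀) q) p
      = χ ^ 2 * c ^ 2 * lap3 (fun q => div3 E q - σ q / ε₀) p := by
  intro p
  -- component smoothness
  have hEi : ∀ i : Fin 3, ContDiff ℝ 4 (fun q => E q i) := fun i => contDiff_pi.mp hE i
  have hBi : ∀ i : Fin 3, ContDiff ℝ 4 (fun q => B q i) := fun i => contDiff_pi.mp hB i
  have hJi : ∀ i : Fin 3, ContDiff ℝ 4 (fun q => J q i) := fun i => contDiff_pi.mp hJ i
  -- divergence of E is C³
  have hdivE : ContDiff ℝ 3 (fun q => div3 E q) := by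
    have h1 : (fun q => div3 E q) = fun q => ∑ i : Fin 3, pd3 i (fun r => E r i) q := rfl
    rw [h1]
    exact ContDiff.sum fun i _ => contDiff_pd3 (hEi i) (by norm_num) i
  have hσε : ContDiff ℝ 3 (fun q => σ q / ε₀) := (hσ.div_const ε₀).of_le (by norm_num)
  -- the Gauss error g is C³
  have hg : ContDiff ℝ 3 (fun q => div3 E q - σ q / ε₀) := hdivE.sub hσε
  -- curl components
  have hcurl0 : (fun q => curl3 B q 0)
      = fun q => pd3 1 (fun r => B r 2) q - pd3 2 (fun r => B r 1) q := by
    funext q; simp [curl3]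
  have hcurl1 : (fun q => curl3 B q 1)
      = fun q => pd3 2 (fun r => B r 0) q - pd3 0 (fun r => B r 2) q := by
    funext q; simp [curl3]
  have hcurl2 : (fun q => curl3 B q 2)
      = fun q => pd3 0 (fun r => B r 1) q - pd3 1 (fun r => B r 0) q := by
    funext q; simp [curl3]
  have hBij : ∀ (i j : Fin 3), ContDiff ℝ 3 (fun q => pd3 j (fun r => B r i) q) :=
    fun i j => contDiff_pd3 (hBi i) (by norm_num) j
  have hcurld : ∀ i : Fin 3, ContDiff ℝ 3 (fun q => curl3 B q i) := by
    intro i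
    fin_cases i
    · show ContDiff ℝ 3 fun q => curl3 B q 0
      rw [hcurl0]; exact (hBij 2 1).sub (hBij 1 2)
    · show ContDiff ℝ 3 fun q => curl3 B q 1
      rw [hcurl1]; exact (hBij 0 2).sub (hBij 2 0)
    · show ContDiff ℝ 3 fun q => curl3 B q 2
      rw [hcurl2]; exact (hBij 1 0).sub (hBij 0 1)
  -- divergence of curl vanishes
  have hdivcurl : ∀ q, pd3 0 (fun r => curl3 B r 0) q + pd3 1 (fun r => curl3 B r 1) q
      + pd3 2 (fun r => curl3 B r 2) q = 0 := by
    intro q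
    rw [hcurl0, hcurl1, hcurl2]
    rw [pd3_sub_s4 ((hBij 2 1).differentiable (by norm_num) q)
        ((hBij 1 2).differentiable (by norm_num) q),
      pd3_sub_s4 ((hBij 0 2).differentiable (by norm_num) q)
        ((hBij 2 0).differentiable (by norm_num) q),
      pd3_sub_s4 ((hBij 1 0).differentiable (by norm_num) q)
        ((hBij 0 1).differentiable (by norm_num) q)]
    have c1 := pd3_comm (fun r => B r 2) ((hBi 2).of_le (by norm_num)) 0 1 q
    have c2 := pd3_comm (fun r => B r 1) ((hBi 1).of_le (by norm_num)) 0 2 q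
    have c3 := pd3_comm (fun r => B r 0) ((hBi 0).of_le (by norm_num)) 1 2 q
    linarith
  -- pointwise consequences of the PDEs
  have hφt : ∀ q, pt3 φ q = -χ * (div3 E q - σ q / ε₀) := fun q => by linarith [cleaning q]
  have hσt : ∀ q, pt3 σ q = -div3 J q := fun q => by linarith [charge q]
  have hEt : ∀ (i : Fin 3) q, pt3 (fun r => E r i) q
      = c ^ 2 * curl3 B q i - χ * c ^ 2 * pd3 i φ q - ε₀⁻¹ * J q i := by
    intro i q
    have h0 := congrFun (ampere q) i
    simp only [Pi.add_apply, Pi.sub_apply, Pi.smul_apply, Pi.neg_apply, smul_eq_mul] at h0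
    have h1 : pt3 (fun r => E r i) q = pt3 E q i :=
      dv_pi (hE.differentiable (by norm_num) q) i _
    have h2 : grad3 φ q i = pd3 i φ q := rfl
    rw [h2] at h0
    rw [h1]
    linarith
  -- smoothness of the partial derivatives of φ
  have hφi : ∀ i : Fin 3, ContDiff ℝ 3 (fun q => pd3 i φ q) :=
    fun i => contDiff_pd3 hφ (by norm_num) i
  -- first time derivative of g equals -χc²·Δφ
  have ht1 : ∀ q, pt3 (fun r => div3 E r - σ r / ε₀) q = -(χ * c ^ 2) * lap3 φ q := by
    intro q
    rw [pt3_sub (hdivE.differentiable (by norm_num) q) (hσε.differentiable (by norm_num) q)]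
    -- time derivative of σ/ε₀
    have hσ' : pt3 (fun r => σ r / ε₀) q = -div3 J q / ε₀ := by
      rw [pt3_div_const (hσ.differentiable (by norm_num) q), hσt q]
    -- time derivative of div E
    have hsplit : (fun r => div3 E r)
        = fun r => pd3 0 (fun s => E s 0) r + pd3 1 (fun s => E s 1) r
            + pd3 2 (fun s => E s 2) r := by
      funext r; simp [div3, Fin.sum_univ_three]
    have hEd : ∀ i : Fin 3, ContDiff ℝ 3 (fun r => pd3 i (fun s => E s i) r) :=
      fun i => contDiff_pd3 (hEi i) (by norm_num) i
    rw [hsplit,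
      pt3_add (((hEd 0).differentiable (by norm_num)).fun_add
          ((hEd 1).differentiable (by norm_num)) q)
        ((hEd 2).differentiable (by norm_num) q),
      pt3_add ((hEd 0).differentiable (by norm_num) q)
        ((hEd 1).differentiable (by norm_num) q)]
    -- commute time and space derivatives, then substitute the Ampère law
    have key : ∀ i : Fin 3, pt3 (fun r => pd3 i (fun s => E s i) r) q
        = c ^ 2 * pd3 i (fun r => curl3 B r i) q - χ * c ^ 2 * pd3 i (fun r => pd3 i φ r) q
          - ε₀⁻¹ * pd3 i (fun r => J r i) q := by
      intro i
      rw [pt3_pd3_comm (fun s => E s i) ((hEi i).of_le (by norm_num)) i q]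
      have hrw : (fun r => pt3 (fun s => E s i) r)
          = fun r => c ^ 2 * curl3 B r i - χ * c ^ 2 * pd3 i φ r - ε₀⁻¹ * J r i :=
        funext fun r => hEt i r
      rw [hrw]
      have d1 : DifferentiableAt ℝ (fun r => c ^ 2 * curl3 B r i) q :=
        (((hcurld i).differentiable (by norm_num)).const_mul _) q
      have d2 : DifferentiableAt ℝ (fun r => χ * c ^ 2 * pd3 i φ r) q :=
        (((hφi i).differentiable (by norm_num)).const_mul _) q
      have d3 : DifferentiableAt ℝ (fun r => ε₀⁻¹ * J r i) q :=
        (((hJi i).differentiable (by norm_num)).const_mul _) q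
      rw [pd3_sub_s4 (d1.fun_sub d2) d3 i, pd3_sub_s4 d1 d2 i,
        pd3_const_mul ((hcurld i).differentiable (by norm_num) q) _ i,
        pd3_const_mul ((hφi i).differentiable (by norm_num) q) _ i,
        pd3_const_mul ((hJi i).differentiable (by norm_num) q) _ i]
    rw [key 0, key 1, key 2, hσ']
    have hlap : lap3 φ q = pd3 0 (fun r => pd3 0 φ r) q + pd3 1 (fun r => pd3 1 φ r) q
        + pd3 2 (fun r => pd3 2 φ r) q := by
      simp [lap3, Fin.sum_univ_three]
    have hdivJ : div3 J q = pd3 0 (fun r => J r 0) q + pd3 1 (fun r => J r 1) q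
        + pd3 2 (fun r => J r 2) q := by
      simp [div3, Fin.sum_univ_three]
    have hdc := hdivcurl q
    rw [hlap, hdivJ]
    linear_combination c ^ 2 * hdc
  -- now the second time derivative
  have hrw1 : (fun q => pt3 (fun r => div3 E r - σ r / ε₀) q)
      = fun q => -(χ * c ^ 2) * lap3 φ q := funext ht1
  rw [hrw1]
  have hψ : ∀ i : Fin 3, ContDiff ℝ 2 (fun q => pd3 i (fun r => pd3 i φ r) q) :=
    fun i => contDiff_pd3 (hφi i) (by norm_num) i
  have hlapφ : ContDiff ℝ 2 (fun q => lap3 φ q) := by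
    have h1 : (fun q => lap3 φ q) = fun q => ∑ i : Fin 3, pd3 i (fun r => pd3 i φ r) q := rfl
    rw [h1]
    exact ContDiff.sum fun i _ => hψ i
  have hstep1 : pt3 (fun q => -(χ * c ^ 2) * lap3 φ q) p
      = -(χ * c ^ 2) * pt3 (fun q => lap3 φ q) p :=
    pt3_const_mul (hlapφ.differentiable (by norm_num) p) _
  rw [hstep1]
  have hlsplit : (fun q => lap3 φ q) = fun q => pd3 0 (fun r => pd3 0 φ r) q
      + pd3 1 (fun r => pd3 1 φ r) q + pd3 2 (fun r => pd3 2 φ r) q :=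
    funext fun q => by simp [lap3, Fin.sum_univ_three]
  rw [hlsplit,
    pt3_add (((hψ 0).differentiable (by norm_num)).fun_add
        ((hψ 1).differentiable (by norm_num)) p)
      ((hψ 2).differentiable (by norm_num) p),
    pt3_add ((hψ 0).differentiable (by norm_num) p) ((hψ 1).differentiable (by norm_num) p)]
  have hgd : ∀ i : Fin 3, ContDiff ℝ 2 (fun q => pd3 i (fun r => div3 E r - σ r / ε₀) q) :=
    fun i => contDiff_pd3 hg (by norm_num) i
  have key2 : ∀ i : Fin 3, pt3 (fun q => pd3 i (fun r => pd3 i φ r) q) p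
      = -χ * pd3 i (fun q => pd3 i (fun r => div3 E r - σ r / ε₀) q) p := by
    intro i
    rw [pt3_pd3_comm (fun r => pd3 i φ r) ((hφi i).of_le (by norm_num)) i p]
    have h2 : (fun q => pt3 (fun r => pd3 i φ r) q)
        = fun q => pd3 i (fun r => pt3 φ r) q :=
      funext fun q => pt3_pd3_comm φ (hφ.of_le (by norm_num)) i q
    have h3 : (fun r => pt3 φ r) = fun r => -χ * (div3 E r - σ r / ε₀) := funext hφt
    have h4 : (fun q => pt3 (fun r => pd3 i φ r) q)
        = fun q => -χ * pd3 i (fun r => div3 E r - σ r / ε₀) q := by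
      rw [h2, h3]
      exact funext fun q => pd3_const_mul (hg.differentiable (by norm_num) q) _ i
    rw [h4]
    exact pd3_const_mul ((hgd i).differentiable (by norm_num) p) _ i
  rw [key2 0, key2 1, key2 2]
  have hlapg : lap3 (fun q => div3 E q - σ q / ε₀) p
      = pd3 0 (fun q => pd3 0 (fun r => div3 E r - σ r / ε₀) q) p
      + pd3 1 (fun q => pd3 1 (fun r => div3 E r - σ r / ε₀) q) p
      + pd3 2 (fun q => pd3 2 (fun r => div3 E r - σ r / ε₀) q) p := by
    simp [lap3, Fin.sum_univ_three]
  rw [hlapg]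
  ring
end
end

section
/- Let e > 0, mᵢ > 0, mₑ > 0 be constants, and let n : ℝ × ℝ³ → ℝ be a positive, continuously differentiable number density, uᵢ, uₑ, 𝐄, 𝐁 : ℝ × ℝ³ → ℝ³ continuously differentiable vector fields, and ℙᵢ, ℙₑ : ℝ × ℝ³ → ℝ³ˣ³ continuously differentiable tensor fields. Suppose the collisionless momentum balance equations hold for both species: ∂ₜ(mₛ n uₛ) + ∇·(mₛ n uₛ⊗uₛ + ℙₛ) = qₛ n (𝐄 + uₛ×𝐁) for s ∈ {i, e}, with qᵢ = e and qₑ = −e. Define ρ = n(mᵢ+mₑ), 𝐮 = (mᵢuᵢ + mₑuₑ)/(mᵢ+mₑ), 𝐉 = n e (uᵢ − uₑ), m̃ᵢ = mᵢ/e, m̃ₑ = mₑ/e. Then the generalized Ohm's law holds pointwise: 𝐄 = 𝐁×𝐮 + ((m̃ᵢ − m̃ₑ)/ρ) 𝐉×𝐁 + (1/ρ) ∇·(m̃ₑℙᵢ − m̃ᵢℙₑ) + (m̃ᵢm̃ₑ/ρ) ( ∂ₜ𝐉 + ∇·( 𝐮⊗𝐉 + 𝐉⊗𝐮 + ((m̃ₑ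 − m̃ᵢ)/ρ) 𝐉⊗𝐉 ) ). -/
noncomputable section

/-- Spatial divergence of a tensor field, contracting the first index:
`(∇·T)ᵢ = Σⱼ ∂ⱼ (T j i)`. -/
def tdiv3 (T : ℝ × (Fin 3 → ℝ) → Fin 3 → Fin 3 → ℝ)
    (p : ℝ × (Fin 3 → ℝ)) : Fin 3 → ℝ :=
  fun i => ∑ j, pd3 j (fun q => T q j i) p

lemma pd3_lin {f g h : ℝ × (Fin 3 → ℝ) → ℝ} {p : ℝ × (Fin 3 → ℝ)} {j : Fin 3}
    (hf : DifferentiableAt ℝ f p) (hg : DifferentiableAt ℝ g p) (hh : DifferentiableAt ℝ h p)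
    (a b c : ℝ) :
    pd3 j (fun q => a * f q - b * g q - c * h q) p
      = a * pd3 j f p - b * pd3 j g p - c * pd3 j h p := by
  unfold pd3
  rw [fderiv_fun_sub (f := fun q => a * f q - b * g q) ((hf.const_mul a).sub (hg.const_mul b)) (hh.const_mul c),
      fderiv_fun_sub (f := fun q => a * f q) (g := fun q => b * g q) (hf.const_mul a) (hg.const_mul b),
      fderiv_const_mul hf, fderiv_const_mul hg, fderiv_const_mul hh]
  simp

lemma pt3_lin {f g : ℝ × (Fin 3 → ℝ) → (Fin 3 → ℝ)} {p : ℝ × (Fin 3 → ℝ)}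
    (hf : DifferentiableAt ℝ f p) (hg : DifferentiableAt ℝ g p) (a b : ℝ) :
    pt3 (fun q => a • f q - b • g q) p = a • pt3 f p - b • pt3 g p := by
  unfold pt3
  rw [fderiv_fun_sub (f := fun q => a • f q) (g := fun q => b • g q) (hf.const_smul a) (hg.const_smul b),
      fderiv_fun_const_smul hf, fderiv_fun_const_smul hg]
  simp

set_option maxHeartbeats 2000000 in
/-- **The collisionless generalized Ohm's law.**
For a quasineutral two-species plasma (common number density `n`, charges
`qᵢ = e`, `qₑ = −e`) whose species satisfy the collisionless momentum balance
`∂ₜ(mₛnuₛ) + ∇·(mₛnuₛ⊗uₛ + ℙₛ) = qₛn(𝐄 + uₛ×𝐁)`, the electric field satisfies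
`𝐄 = 𝐁×𝐮 + ((m̃ᵢ−m̃ₑ)/ρ)𝐉×𝐁 + (1/ρ)∇·(m̃ₑℙᵢ − m̃ᵢℙₑ)
   + (m̃ᵢm̃ₑ/ρ)(∂ₜ𝐉 + ∇·(𝐮⊗𝐉 + 𝐉⊗𝐮 + ((m̃ₑ−m̃ᵢ)/ρ)𝐉⊗𝐉))`,
where `ρ = n(mᵢ+mₑ)`, `𝐮 = (mᵢuᵢ+mₑuₑ)/(mᵢ+mₑ)`, `𝐉 = ne(uᵢ−uₑ)`, `m̃ₛ = mₛ/e`. -/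
theorem generalized_ohms_law
    (e mi me : ℝ) (he : 0 < e) (hmi : 0 < mi) (hme : 0 < me)
    (n : ℝ × (Fin 3 → ℝ) → ℝ) (hn_pos : ∀ p, 0 < n p) (hn : ContDiff ℝ 1 n)
    (ui ue E B : ℝ × (Fin 3 → ℝ) → (Fin 3 → ℝ))
    (hui : ContDiff ℝ 1 ui) (hue : ContDiff ℝ 1 ue)
    (hE : ContDiff ℝ 1 E) (hB : ContDiff ℝ 1 B)
    (Ppi Ppe : ℝ × (Fin 3 → ℝ) → Fin 3 → Fin 3 → ℝ)
    (hPpi : ContDiff ℝ 1 Ppi) (hPpe : ContDiff ℝ 1 Ppe)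
    (mom_i : ∀ p, pt3 (fun q => (mi * n q) • ui q) p
        + tdiv3 (fun q => fun j k => mi * n q * ui q j * ui q k + Ppi q j k) p
        = (e * n p) • (E p + crossProduct (ui p) (B p)))
    (mom_e : ∀ p, pt3 (fun q => (me * n q) • ue q) p
        + tdiv3 (fun q => fun j k => me * n q * ue q j * ue q k + Ppe q j k) p
        = (-e * n p) • (E p + crossProduct (ue p) (B p)))
    (ρ : ℝ × (Fin 3 → ℝ) → ℝ) (hρ : ∀ p, ρ p = n p * (mi + me))
    (u J : ℝ × (Fin 3 → ℝ) → (Fin 3 → ℝ))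
    (hu : ∀ p, u p = (mi + me)⁻¹ • (mi • ui p + me • ue p))
    (hJ : ∀ p, J p = (n p * e) • (ui p - ue p)) :
    ∀ p, E p
      = crossProduct (B p) (u p)
        + ((mi / e - me / e) / ρ p) • crossProduct (J p) (B p)
        + (ρ p)⁻¹ •
            tdiv3 (fun q => fun j k => (me / e) * Ppi q j k - (mi / e) * Ppe q j k) p
        + (((mi / e) * (me / e)) / ρ p) •
            (pt3 J p
              + tdiv3 (fun q => fun j k => u q j * J q k + J q j * u q k
                  + ((me / e - mi / e) / ρ q) * (J q j * J q k)) p) := by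
  have hne : e ≠ 0 := ne_of_gt he
  have hmi' : mi ≠ 0 := ne_of_gt hmi
  have hme' : me ≠ 0 := ne_of_gt hme
  have hsum : mi + me ≠ 0 := by positivity
  have hnq : ∀ q, n q ≠ 0 := fun q => ne_of_gt (hn_pos q)
  -- differentiability facts
  have hUi : ∀ j, ContDiff ℝ 1 (fun q => ui q j) := contDiff_pi.mp hui
  have hUe : ∀ j, ContDiff ℝ 1 (fun q => ue q j) := contDiff_pi.mp hue
  have hPI : ∀ j k, ContDiff ℝ 1 (fun q => Ppi q j k) :=
    fun j k => contDiff_pi.mp (contDiff_pi.mp hPpi j) k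
  have hPE : ∀ j k, ContDiff ℝ 1 (fun q => Ppe q j k) :=
    fun j k => contDiff_pi.mp (contDiff_pi.mp hPpe j) k
  intro p
  have hfi : DifferentiableAt ℝ (fun q => (mi * n q) • ui q) p :=
    (((contDiff_const.mul hn).smul hui).differentiable one_ne_zero) p
  have hfe : DifferentiableAt ℝ (fun q => (me * n q) • ue q) p :=
    (((contDiff_const.mul hn).smul hue).differentiable one_ne_zero) p
  have hTi : ∀ j k, DifferentiableAt ℝ (fun q => mi * n q * ui q j * ui q k + Ppi q j k) p :=
    fun j k => (((((contDiff_const.mul hn).mul (hUi j)).mul (hUi k)).add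
      (hPI j k)).differentiable one_ne_zero) p
  have hTe : ∀ j k, DifferentiableAt ℝ (fun q => me * n q * ue q j * ue q k + Ppe q j k) p :=
    fun j k => (((((contDiff_const.mul hn).mul (hUe j)).mul (hUe k)).add
      (hPE j k)).differentiable one_ne_zero) p
  have hPc : ∀ j k, DifferentiableAt ℝ (fun q => (me / e) * Ppi q j k - (mi / e) * Ppe q j k) p :=
    fun j k => (((contDiff_const.mul (hPI j k)).sub
      (contDiff_const.mul (hPE j k))).differentiable one_ne_zero) p
  -- J as a combination of the momentum-density fields
  have hJeq : J = fun q => (e / mi) • ((mi * n q) • ui q) - (e / me) • ((me * n q) • ue q) := by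
    funext q
    rw [hJ, smul_smul, smul_smul, smul_sub,
      show e / mi * (mi * n q) = n q * e by field_simp,
      show e / me * (me * n q) = n q * e by field_simp]
  have hpt : pt3 J p = (e / mi) • pt3 (fun q => (mi * n q) • ui q) p
      - (e / me) • pt3 (fun q => (me * n q) • ue q) p := by
    rw [hJeq]; exact pt3_lin hfi hfe _ _
  -- pointwise identity of the inertial tensor components
  have hKcomp : ∀ j k : Fin 3,
      (fun q => u q j * J q k + J q j * u q k
          + ((me / e - mi / e) / ρ q) * (J q j * J q k))
      = fun q => (e / mi) * (mi * n q * ui q j * ui q k + Ppi q j k)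
          - (e / me) * (me * n q * ue q j * ue q k + Ppe q j k)
          - (e * e / (mi * me)) * ((me / e) * Ppi q j k - (mi / e) * Ppe q j k) := by
    intro j k
    funext q
    have h8 : 0 < n q := hn_pos q
    have h9 : n q ≠ 0 := hnq q
    have h10 : mi * n q * e + me * n q * e ≠ 0 := by positivity
    simp only [hu, hJ, hρ, Pi.smul_apply, Pi.add_apply, Pi.sub_apply, smul_eq_mul]
    field_simp
    ring
  -- divergence of the inertial tensor, componentwise
  have htd : ∀ k : Fin 3,
      tdiv3 (fun q => fun j k => u q j * J q k + J q j * u q k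
          + ((me / e - mi / e) / ρ q) * (J q j * J q k)) p k
      = (e / mi) * tdiv3 (fun q => fun j k => mi * n q * ui q j * ui q k + Ppi q j k) p k
        - (e / me) * tdiv3 (fun q => fun j k => me * n q * ue q j * ue q k + Ppe q j k) p k
        - (e * e / (mi * me)) *
            tdiv3 (fun q => fun j k => (me / e) * Ppi q j k - (mi / e) * Ppe q j k) p k := by
    intro k
    simp only [tdiv3, Finset.mul_sum, ← Finset.sum_sub_distrib]
    refine Finset.sum_congr rfl fun j _ => ?_
    rw [hKcomp j k]
    exact pd3_lin (hTi j k) (hTe j k) (hPc j k) _ _ _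
  -- combine with the momentum equations
  have hvec : ∀ k : Fin 3,
      pt3 J p k
        + tdiv3 (fun q => fun j k => u q j * J q k + J q j * u q k
            + ((me / e - mi / e) / ρ q) * (J q j * J q k)) p k
      = (e / mi) * (((e * n p) • (E p + crossProduct (ui p) (B p))) k)
        - (e / me) * (((-e * n p) • (E p + crossProduct (ue p) (B p))) k)
        - (e * e / (mi * me)) *
            tdiv3 (fun q => fun j k => (me / e) * Ppi q j k - (mi / e) * Ppe q j k) p k := by
    intro k
    have h1 := congrFun (mom_i p) k
    have h2 := congrFun (mom_e p) k
    simp only [Pi.add_apply] at h1 h2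
    have h3 := congrFun hpt k
    simp only [Pi.sub_apply, Pi.smul_apply, smul_eq_mul] at h3
    rw [htd k]
    linear_combination h3 + (e / mi) * h1 - (e / me) * h2
  -- final assembly
  funext k
  simp only [Pi.add_apply, Pi.smul_apply, smul_eq_mul]
  rw [hvec k]
  have h8 : 0 < n p := hn_pos p
  have h9 : n p ≠ 0 := hnq p
  generalize tdiv3 (fun q => fun j k => (me / e) * Ppi q j k - (mi / e) * Ppe q j k) p k = A
  simp only [hu, hJ, hρ, cross_apply]
  fin_cases k <;>
    · simp only [Pi.smul_apply, Pi.add_apply, Pi.sub_apply, smul_eq_mul,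
        Matrix.cons_val_zero, Matrix.cons_val_one, Matrix.head_cons,
        Matrix.cons_val_two, Matrix.tail_cons, Fin.isValue, Fin.zero_eta, Fin.mk_one, Fin.reduceFinMk, Matrix.cons_val]
      field_simp
      ring
end
end
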